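/- arXiv:2303.14611 — 4 statements merged into one kernel-verified Lean document; each statement's English description precedes it below -/
import Mathlib

section
/- Let (μ_n) be a sequence of Borel probability measures on a compact metric space X, and let Λ be a Borel probability measure on X. Suppose that for every continuous function f : X → ℝ, the Cesàro means (1/N) Σ_{n<N} ∫ f dμ_n converge to ∫ f dΛ, and suppose moreover that for every continuous f, (1/N) Σ_{n<N} |∫ f dμ_n − ∫ f dΛ|² → 0. Then there exists a subset S ⊆ ℕ of natural density 1 such that μ_n converges weakly to Λ along S. -/
open MeasureTheory Filter Topology

/-- `S ⊆ ℕ` has natural density one. -/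
def HasDensityOne (S : Set ℕ) : Prop :=
  Tendsto (fun N : ℕ =>
    (∑ n ∈ Finset.range N, S.indicator (fun _ => (1 : ℝ)) n) / N) atTop (𝓝 1)

private lemma cheb_aux {b : ℕ → ℝ} (hb : ∀ n, 0 ≤ b n)
    (h : Tendsto (fun N : ℕ => (∑ n ∈ Finset.range N, b n) / N) atTop (𝓝 0))
    {ε : ℝ} (hε : 0 < ε) [DecidablePred fun n => ε ≤ b n] :
    Tendsto (fun M : ℕ =>
      (((Finset.range M).filter (fun n => ε ≤ b n)).card : ℝ) / M) atTop (𝓝 0) := by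
  have key : ∀ M : ℕ, (((Finset.range M).filter (fun n => ε ≤ b n)).card : ℝ) / M
      ≤ ((∑ n ∈ Finset.range M, b n) / M) / ε := by
    intro M
    rcases Nat.eq_zero_or_pos M with hM | hM
    · simp [hM]
    have hM0 : (0 : ℝ) < M := by exact_mod_cast hM
    have h1 : (((Finset.range M).filter (fun n => ε ≤ b n)).card : ℝ) * ε
        ≤ ∑ n ∈ Finset.range M, b n := by
      calc (((Finset.range M).filter (fun n => ε ≤ b n)).card : ℝ) * ε
          = ((Finset.range M).filter (fun n => ε ≤ b n)).card • ε := by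
            rw [nsmul_eq_mul]
        _ ≤ ∑ n ∈ (Finset.range M).filter (fun n => ε ≤ b n), b n :=
            Finset.card_nsmul_le_sum _ _ _ (fun x hx => (Finset.mem_filter.mp hx).2)
        _ ≤ ∑ n ∈ Finset.range M, b n :=
            Finset.sum_le_sum_of_subset_of_nonneg (Finset.filter_subset _ _)
              (fun i _ _ => hb i)
    rw [div_div, div_le_div_iff₀ hM0 (by positivity)]
    nlinarith [h1, hM0.le]
  have hupper : Tendsto (fun M : ℕ => ((∑ n ∈ Finset.range M, b n) / M) / ε)
      atTop (𝓝 0) := by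
    simpa using h.div_const ε
  refine tendsto_of_tendsto_of_tendsto_of_le_of_le tendsto_const_nhds hupper
    (fun M => by positivity) key

private lemma extract_density_one {b : ℕ → ℝ} (hb : ∀ n, 0 ≤ b n)
    (h : Tendsto (fun N : ℕ => (∑ n ∈ Finset.range N, b n) / N) atTop (𝓝 0)) :
    ∃ S : Set ℕ, HasDensityOne S ∧ Tendsto b (atTop ⊓ 𝓟 S) (𝓝 0) := by
  classical
  have hH : ∀ j : ℕ, ∃ N₀ : ℕ, ∀ M ≥ N₀,
      (((Finset.range M).filter (fun n => 1 / ((j : ℝ) + 1) ≤ b n)).card : ℝ) / M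
        < 1 / ((j : ℝ) + 1) := by
    intro j
    have h1 := cheb_aux hb h (ε := 1 / ((j : ℝ) + 1)) (by positivity)
    exact eventually_atTop.mp
      (h1.eventually_lt_const (by positivity : (0:ℝ) < 1 / ((j : ℝ) + 1)))
  choose N' hN' using hH
  set N : ℕ → ℕ := fun j => Nat.rec (N' 0) (fun j ih => max (ih + 1) (N' (j + 1))) j
    with hNdef
  have hNmono : StrictMono N :=
    strictMono_nat_of_lt_succ (fun j =>
      lt_of_lt_of_le (Nat.lt_succ_self _) (le_max_left _ _))
  have hNs : ∀ j, N' j ≤ N j := by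
    intro j
    cases j with
    | zero => exact le_refl _
    | succ j => exact le_max_right _ _
  have hNP : ∀ j, ∀ M, N j ≤ M →
      (((Finset.range M).filter (fun n => 1 / ((j : ℝ) + 1) ≤ b n)).card : ℝ) / M
        < 1 / ((j : ℝ) + 1) :=
    fun j M hM => hN' j M (le_trans (hNs j) hM)
  set S : Set ℕ := {n | ∀ j, N j ≤ n → b n < 1 / ((j : ℝ) + 1)} with hSdef
  have hbS : Tendsto b (atTop ⊓ 𝓟 S) (𝓝 0) := by
    rw [Metric.tendsto_nhds]
    intro ε hε
    obtain ⟨j, hj⟩ := exists_nat_one_div_lt hε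
    rw [eventually_inf_principal]
    filter_upwards [eventually_ge_atTop (N j)] with n hn hnS
    rw [Real.dist_eq, sub_zero, abs_of_nonneg (hb n)]
    exact lt_trans (hnS j hn) hj
  have hCsub : ∀ j M, M < N (j + 1) →
      (Finset.range M).filter (fun n => n ∉ S) ⊆
        (Finset.range M).filter (fun n => 1 / ((j : ℝ) + 1) ≤ b n) := by
    intro j M hM n hn
    rw [Finset.mem_filter] at hn ⊢
    refine ⟨hn.1, ?_⟩
    have hnM : n < M := Finset.mem_range.mp hn.1
    have hnotS : ¬ (∀ i, N i ≤ n → b n < 1 / ((i : ℝ) + 1)) := hn.2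
    push_neg at hnotS
    obtain ⟨i, hiN, hib⟩ := hnotS
    have hij : i ≤ j := by
      by_contra hc
      push_neg at hc
      have h1 : N (j + 1) ≤ N i := hNmono.monotone (Nat.succ_le_of_lt hc)
      omega
    calc 1 / ((j : ℝ) + 1) ≤ 1 / ((i : ℝ) + 1) := by
          apply one_div_le_one_div_of_le (by positivity)
          have : (i : ℝ) ≤ (j : ℝ) := by exact_mod_cast hij
          linarith
      _ ≤ b n := hib
  have hCD : Tendsto
      (fun M : ℕ => (((Finset.range M).filter (fun n => n ∉ S)).card : ℝ) / M)
      atTop (𝓝 0) := by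
    rw [Metric.tendsto_nhds]
    intro ε hε
    obtain ⟨j₀, hj₀⟩ := exists_nat_one_div_lt hε
    filter_upwards [eventually_ge_atTop (max 1 (N j₀))] with M hM
    have hM1 : 1 ≤ M := le_trans (le_max_left _ _) hM
    have hMj₀ : N j₀ ≤ M := le_trans (le_max_right _ _) hM
    have hM0 : (0 : ℝ) < M := by exact_mod_cast hM1
    set j := Nat.findGreatest (fun j => N j ≤ M) M with hjdef
    have hj₀M : j₀ ≤ M := le_trans hNmono.le_apply hMj₀
    have hjP : N j ≤ M := Nat.findGreatest_spec (P := fun j => N j ≤ M) hj₀M hMj₀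
    have hj₀j : j₀ ≤ j := Nat.le_findGreatest (P := fun j => N j ≤ M) hj₀M hMj₀
    have hjlt : M < N (j + 1) := by
      rcases le_or_gt (j + 1) M with hc | hc
      · have h2 : ¬ N (j + 1) ≤ M :=
          Nat.findGreatest_is_greatest (P := fun j => N j ≤ M) (Nat.lt_succ_self j) hc
        exact lt_of_not_ge h2
      · exact lt_of_lt_of_le hc hNmono.le_apply
    rw [Real.dist_eq, sub_zero, abs_of_nonneg (by positivity)]
    calc (((Finset.range M).filter (fun n => n ∉ S)).card : ℝ) / M
        ≤ (((Finset.range M).filter (fun n => 1 / ((j : ℝ) + 1) ≤ b n)).card : ℝ) / M := by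
          have hcc : (((Finset.range M).filter (fun n => n ∉ S)).card : ℝ)
              ≤ (((Finset.range M).filter
                  (fun n => 1 / ((j : ℝ) + 1) ≤ b n)).card : ℝ) := by
            exact_mod_cast Finset.card_le_card (hCsub j M hjlt)
          exact div_le_div_of_nonneg_right hcc hM0.le
      _ < 1 / ((j : ℝ) + 1) := hNP j M hjP
      _ ≤ 1 / ((j₀ : ℝ) + 1) := by
          apply one_div_le_one_div_of_le (by positivity)
          have : (j₀ : ℝ) ≤ (j : ℝ) := by exact_mod_cast hj₀j
          linarith
      _ < ε := hj₀
  have hdens : HasDensityOne S := by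
    unfold HasDensityOne
    have heq : ∀ᶠ M : ℕ in atTop,
        1 - (((Finset.range M).filter (fun n => n ∉ S)).card : ℝ) / M
          = (∑ n ∈ Finset.range M, S.indicator (fun _ => (1 : ℝ)) n) / M := by
      filter_upwards [eventually_ge_atTop 1] with M hM
      have hM0 : (0 : ℝ) < M := by exact_mod_cast hM
      have hsum : (∑ n ∈ Finset.range M, S.indicator (fun _ => (1 : ℝ)) n)
          = (((Finset.range M).filter (fun n => n ∈ S)).card : ℝ) := by
        rw [← Finset.sum_boole]
        refine Finset.sum_congr rfl (fun n _ => ?_)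
        by_cases hn : n ∈ S <;> simp [Set.indicator, hn]
      have hcard : ((Finset.range M).filter (fun n => n ∈ S)).card
          + ((Finset.range M).filter (fun n => n ∉ S)).card = M := by
        rw [Finset.card_filter_add_card_filter_not, Finset.card_range]
      have hc' : (((Finset.range M).filter (fun n => n ∈ S)).card : ℝ)
          + (((Finset.range M).filter (fun n => n ∉ S)).card : ℝ) = M := by
        exact_mod_cast hcard
      rw [hsum]
      field_simp
      linarith
    refine Tendsto.congr' heq ?_
    have h2 := (tendsto_const_nhds :
      Tendsto (fun _ : ℕ => (1 : ℝ)) atTop (𝓝 1)).sub hCD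
    simpa using h2
  exact ⟨S, hdens, hbS⟩

theorem density_one_weak_convergence
    {X : Type*} [MetricSpace X] [CompactSpace X] [MeasurableSpace X] [BorelSpace X]
    (μ : ℕ → Measure X) [∀ n, IsProbabilityMeasure (μ n)]
    (Λ : Measure X) [IsProbabilityMeasure Λ]
    (hmean : ∀ f : C(X, ℝ),
      Tendsto (fun N : ℕ => (∑ n ∈ Finset.range N, ∫ x, f x ∂(μ n)) / N) atTop
        (𝓝 (∫ x, f x ∂Λ)))
    (hvar : ∀ f : C(X, ℝ),
      Tendsto (fun N : ℕ =>
        (∑ n ∈ Finset.range N, |∫ x, f x ∂(μ n) - ∫ x, f x ∂Λ| ^ 2) / N) atTop (𝓝 0)) :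
    ∃ S : Set ℕ, HasDensityOne S ∧
      ∀ f : C(X, ℝ),
        Tendsto (fun n => ∫ x, f x ∂(μ n)) (atTop ⊓ 𝓟 S) (𝓝 (∫ x, f x ∂Λ)) := by
  classical
  obtain ⟨u, hu⟩ := TopologicalSpace.exists_dense_seq C(X, ℝ)
  set d : ℕ → ℕ → ℝ := fun k n => |∫ x, u k x ∂(μ n) - ∫ x, u k x ∂Λ| with hd
  set c : ℕ → ℕ → ℝ := fun k n => min 1 (d k n ^ 2) with hc
  have hc0 : ∀ k n, 0 ≤ c k n := fun k n => le_min zero_le_one (sq_nonneg _)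
  have hc1 : ∀ k n, c k n ≤ 1 := fun k n => min_le_left _ _
  have hcle : ∀ k n, c k n ≤ d k n ^ 2 := fun k n => min_le_right _ _
  set w : ℕ → ℝ := fun k => (1 / 2 : ℝ) ^ (k + 1) with hw
  have hw0 : ∀ k, 0 < w k := fun k => by positivity
  have hsumw : Summable w := by
    have h1 : Summable (fun k => (1 / 2 : ℝ) * (1 / 2) ^ k) :=
      (summable_geometric_of_lt_one (by norm_num) (by norm_num)).mul_left _
    exact h1.congr (fun k => by rw [hw]; ring)
  have hsumwt : ∑' k, w k = 1 := by
    have h1 : ∑' k, w k = ∑' k, (1 / 2 : ℝ) * (1 / 2) ^ k :=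
      tsum_congr (fun k => by rw [hw]; ring)
    rw [h1, tsum_mul_left, tsum_geometric_of_lt_one (by norm_num) (by norm_num)]
    norm_num
  set b : ℕ → ℝ := fun n => ∑' k, w k * c k n with hb
  have hsummand : ∀ n, Summable (fun k => w k * c k n) := fun n =>
    Summable.of_nonneg_of_le (fun k => mul_nonneg (hw0 k).le (hc0 k n))
      (fun k => mul_le_of_le_one_right (hw0 k).le (hc1 k n)) hsumw
  have hb0 : ∀ n, 0 ≤ b n := fun n =>
    tsum_nonneg (fun k => mul_nonneg (hw0 k).le (hc0 k n))
  have havgc : ∀ k, Tendsto (fun N : ℕ => (∑ n ∈ Finset.range N, c k n) / N)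
      atTop (𝓝 0) := by
    intro k
    refine tendsto_of_tendsto_of_tendsto_of_le_of_le tendsto_const_nhds (hvar (u k))
      (fun N => by positivity) (fun N => ?_)
    apply div_le_div_of_nonneg_right ?_ (Nat.cast_nonneg N)
    exact Finset.sum_le_sum (fun n _ => hcle k n)
  have havgb : Tendsto (fun N : ℕ => (∑ n ∈ Finset.range N, b n) / N) atTop (𝓝 0) := by
    rw [Metric.tendsto_nhds]
    intro ε hε
    obtain ⟨K, hK⟩ : ∃ K : ℕ, (1 / 2 : ℝ) ^ K < ε / 2 :=
      exists_pow_lt_of_lt_one (by positivity) (by norm_num)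
    have hfin : Tendsto
        (fun N : ℕ => ∑ k ∈ Finset.range K,
          w k * ((∑ n ∈ Finset.range N, c k n) / N)) atTop (𝓝 0) := by
      have h1 := tendsto_finset_sum (Finset.range K)
        (fun k _ => (havgc k).const_mul (w k))
      simpa using h1
    filter_upwards [hfin.eventually_lt_const (by positivity : (0:ℝ) < ε / 2)] with N hN
    have hub : (∑ n ∈ Finset.range N, b n) / N
        ≤ ∑ k ∈ Finset.range K, w k * ((∑ n ∈ Finset.range N, c k n) / N)
          + (1 / 2 : ℝ) ^ K := by
      have htail : ∀ n, ∑' k, w (k + K) * c (k + K) n ≤ (1 / 2 : ℝ) ^ K := by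
        intro n
        have hs1 : Summable (fun k => w (k + K) * c (k + K) n) :=
          (summable_nat_add_iff K).mpr (hsummand n)
        have hs2 : Summable (fun k => w (k + K)) :=
          (summable_nat_add_iff K).mpr hsumw
        calc ∑' k, w (k + K) * c (k + K) n
            ≤ ∑' k, w (k + K) :=
              Summable.tsum_le_tsum (fun k =>
                mul_le_of_le_one_right (hw0 _).le (hc1 _ n)) hs1 hs2
          _ = ∑' k, (1 / 2 : ℝ) ^ K * w k :=
              tsum_congr (fun k => by rw [hw]; ring)
          _ = (1 / 2 : ℝ) ^ K * 1 := by rw [tsum_mul_left, hsumwt]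
          _ = (1 / 2 : ℝ) ^ K := mul_one _
      have hsplit : ∑ n ∈ Finset.range N, b n
          = ∑ k ∈ Finset.range K, w k * (∑ n ∈ Finset.range N, c k n)
            + ∑ n ∈ Finset.range N, ∑' k, w (k + K) * c (k + K) n := by
        calc ∑ n ∈ Finset.range N, b n
            = ∑ n ∈ Finset.range N,
                (∑ k ∈ Finset.range K, w k * c k n
                  + ∑' k, w (k + K) * c (k + K) n) :=
              Finset.sum_congr rfl
                (fun n _ => (Summable.sum_add_tsum_nat_add K (hsummand n)).symm)
          _ = ∑ n ∈ Finset.range N, ∑ k ∈ Finset.range K, w k * c k n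
                + ∑ n ∈ Finset.range N, ∑' k, w (k + K) * c (k + K) n :=
              Finset.sum_add_distrib
          _ = ∑ k ∈ Finset.range K, w k * (∑ n ∈ Finset.range N, c k n)
                + ∑ n ∈ Finset.range N, ∑' k, w (k + K) * c (k + K) n := by
              rw [Finset.sum_comm]
              congr 1
              exact Finset.sum_congr rfl (fun k _ => (Finset.mul_sum _ _ _).symm)
      rw [hsplit, add_div]
      refine add_le_add (le_of_eq ?_) ?_
      · rw [Finset.sum_div]
        exact Finset.sum_congr rfl (fun k _ => (mul_div_assoc _ _ _))
      · rcases Nat.eq_zero_or_pos N with h0 | h0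
        · simp [h0]
        · have hN0 : (0 : ℝ) < N := by exact_mod_cast h0
          rw [div_le_iff₀ hN0]
          calc ∑ n ∈ Finset.range N, ∑' k, w (k + K) * c (k + K) n
              ≤ ∑ n ∈ Finset.range N, (1 / 2 : ℝ) ^ K :=
                Finset.sum_le_sum (fun n _ => htail n)
            _ = N * (1 / 2 : ℝ) ^ K := by
                rw [Finset.sum_const, Finset.card_range, nsmul_eq_mul]
            _ = (1 / 2 : ℝ) ^ K * N := mul_comm _ _
    rw [Real.dist_eq, sub_zero, abs_of_nonneg
      (div_nonneg (Finset.sum_nonneg (fun n _ => hb0 n)) (Nat.cast_nonneg N))]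
    calc (∑ n ∈ Finset.range N, b n) / N
        ≤ ∑ k ∈ Finset.range K, w k * ((∑ n ∈ Finset.range N, c k n) / N)
          + (1 / 2 : ℝ) ^ K := hub
      _ < ε / 2 + ε / 2 := add_lt_add hN hK
      _ = ε := add_halves ε
  obtain ⟨S, hS1, hS2⟩ := extract_density_one hb0 havgb
  refine ⟨S, hS1, ?_⟩
  have hconv : ∀ k, Tendsto (fun n => ∫ x, u k x ∂(μ n)) (atTop ⊓ 𝓟 S)
      (𝓝 (∫ x, u k x ∂Λ)) := by
    intro k
    have hck : Tendsto (fun n => c k n) (atTop ⊓ 𝓟 S) (𝓝 0) := by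
      have hle : ∀ n, c k n ≤ b n / w k := by
        intro n
        rw [le_div_iff₀ (hw0 k)]
        calc c k n * w k = w k * c k n := mul_comm _ _
          _ ≤ b n := Summable.le_tsum (hsummand n) k
              (fun j _ => mul_nonneg (hw0 j).le (hc0 j n))
      have hdiv : Tendsto (fun n => b n / w k) (atTop ⊓ 𝓟 S) (𝓝 0) := by
        simpa using hS2.div_const (w k)
      exact tendsto_of_tendsto_of_tendsto_of_le_of_le tendsto_const_nhds hdiv
        (fun n => hc0 k n) hle
    have hdk : Tendsto (fun n => d k n) (atTop ⊓ 𝓟 S) (𝓝 0) := by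
      rw [Metric.tendsto_nhds]
      intro ε hε
      filter_upwards [hck.eventually_lt_const
        (lt_min one_pos (by positivity : (0:ℝ) < ε ^ 2))] with n hn
      rw [Real.dist_eq, sub_zero, abs_of_nonneg (abs_nonneg _)]
      have hn1 : c k n < 1 := lt_of_lt_of_le hn (min_le_left _ _)
      have hde : d k n ^ 2 < 1 := by
        by_contra hcon
        push_neg at hcon
        have : (1 : ℝ) ≤ c k n := le_min le_rfl hcon
        linarith
      have hceq : c k n = d k n ^ 2 := min_eq_right hde.le
      have h2 : d k n ^ 2 < ε ^ 2 := by
        have := lt_of_lt_of_le hn (min_le_right _ _)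
        linarith
      exact lt_of_pow_lt_pow_left₀ 2 hε.le h2
    rw [tendsto_iff_dist_tendsto_zero]
    simpa [Real.dist_eq] using hdk
  intro f
  rw [Metric.tendsto_nhds]
  intro ε hε
  obtain ⟨k, hk⟩ := hu.exists_dist_lt f (by positivity : (0:ℝ) < ε / 3)
  have hbd : ∀ (ν : Measure X), IsProbabilityMeasure ν →
      |∫ x, f x ∂ν - ∫ x, u k x ∂ν| < ε / 3 := by
    intro ν hν
    have hif : Integrable (fun x => f x) ν :=
      (map_continuous f).integrable_of_hasCompactSupport
        (HasCompactSupport.of_compactSpace _)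
    have hig : Integrable (fun x => u k x) ν :=
      (map_continuous (u k)).integrable_of_hasCompactSupport
        (HasCompactSupport.of_compactSpace _)
    have hint : ∫ x, f x ∂ν - ∫ x, u k x ∂ν = ∫ x, (f x - u k x) ∂ν :=
      (integral_sub hif hig).symm
    rw [hint]
    have h1 := norm_integral_le_of_norm_le_const (μ := ν)
      (f := fun x => f x - u k x) (C := dist f (u k))
      (Filter.Eventually.of_forall (fun x => by
        rw [Real.norm_eq_abs, ← Real.dist_eq]
        exact ContinuousMap.dist_apply_le_dist x))
    rw [probReal_univ] at h1
    simp only [ENNReal.toReal_one, mul_one] at h1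
    calc |∫ x, (f x - u k x) ∂ν| ≤ dist f (u k) := by
          rw [← Real.norm_eq_abs]; exact h1
      _ < ε / 3 := hk
  filter_upwards [(hconv k).eventually
    (Metric.ball_mem_nhds _ (by positivity : (0:ℝ) < ε / 3))] with n hn
  have hmid : |∫ x, u k x ∂(μ n) - ∫ x, u k x ∂Λ| < ε / 3 := by
    have := Metric.mem_ball.mp hn
    rwa [Real.dist_eq] at this
  have hA : |∫ x, f x ∂(μ n) - ∫ x, u k x ∂(μ n)| < ε / 3 :=
    hbd (μ n) inferInstance
  have hB : |∫ x, f x ∂Λ - ∫ x, u k x ∂Λ| < ε / 3 := hbd Λ inferInstance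
  rw [Real.dist_eq]
  have habs : |∫ x, f x ∂(μ n) - ∫ x, f x ∂Λ|
      ≤ |∫ x, f x ∂(μ n) - ∫ x, u k x ∂(μ n)|
        + |∫ x, u k x ∂(μ n) - ∫ x, u k x ∂Λ|
        + |∫ x, f x ∂Λ - ∫ x, u k x ∂Λ| := by
    have := abs_sub_le (∫ x, f x ∂(μ n)) (∫ x, u k x ∂(μ n)) (∫ x, f x ∂Λ)
    have h2 := abs_sub_le (∫ x, u k x ∂(μ n)) (∫ x, u k x ∂Λ) (∫ x, f x ∂Λ)
    have h3 : |∫ x, u k x ∂Λ - ∫ x, f x ∂Λ| = |∫ x, f x ∂Λ - ∫ x, u k x ∂Λ| :=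
      abs_sub_comm _ _
    linarith
  linarith
end

section
/- Let (a_n^{(k)})_{n} for k ∈ ℕ be countably many sequences of nonnegative reals, each converging to 0 along some set of density 1 (depending on k). Then there is a single set S ⊆ ℕ of density 1 such that for every k, a_n^{(k)} → 0 along S. -/
open Filter Topology

open scoped Classical

/-- count of elements `< N` not in `S` -/
noncomputable def dcCount (S : Set ℕ) (N : ℕ) : ℕ :=
  ((Finset.range N).filter (fun n => n ∉ S)).card

lemma hasDensityOne_iff (S : Set ℕ) :
    HasDensityOne S ↔ Tendsto (fun N : ℕ => (dcCount S N : ℝ) / N) atTop (𝓝 0) := by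
  have key : (fun N : ℕ => (∑ n ∈ Finset.range N, S.indicator (fun _ => (1 : ℝ)) n) / N)
      =ᶠ[atTop] (fun N : ℕ => 1 - (dcCount S N : ℝ) / N) := by
    filter_upwards [eventually_ge_atTop 1] with N hN
    have hN0 : (N : ℝ) ≠ 0 := by
      exact_mod_cast Nat.one_le_iff_ne_zero.mp hN
    have hsum : (∑ n ∈ Finset.range N, S.indicator (fun _ => (1 : ℝ)) n)
        = (((Finset.range N).filter (fun n => n ∈ S)).card : ℝ) := by
      simp [Set.indicator_apply, Finset.sum_boole]
    have hcard : ((Finset.range N).filter (fun n => n ∈ S)).card + dcCount S N = N := by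
      simpa [dcCount] using Finset.card_filter_add_card_filter_not
        (s := Finset.range N) (p := fun n => n ∈ S)
    rw [hsum]
    have : (((Finset.range N).filter (fun n => n ∈ S)).card : ℝ) = N - dcCount S N := by
      have := congrArg (fun m : ℕ => (m : ℝ)) hcard
      push_cast at this
      linarith
    rw [this]
    field_simp
  constructor
  · intro hd
    have h1 : Tendsto (fun N : ℕ => 1 - (dcCount S N : ℝ) / N) atTop (𝓝 1) :=
      hd.congr' key
    have := (tendsto_const_nhds (x := (1:ℝ)) (f := atTop)).sub h1
    simpa using this
  · intro hd
    have h1 : Tendsto (fun N : ℕ => 1 - (dcCount S N : ℝ) / N) atTop (𝓝 1) := by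
      have := (tendsto_const_nhds (x := (1:ℝ)) (f := atTop)).sub hd
      simpa using this
    exact h1.congr' key.symm

theorem density_one_diagonal (a : ℕ → ℕ → ℝ) (ha : ∀ k n, 0 ≤ a k n)
    (h : ∀ k : ℕ, ∃ S : Set ℕ, HasDensityOne S ∧ Tendsto (a k) (atTop ⊓ 𝓟 S) (𝓝 0)) :
    ∃ S : Set ℕ, HasDensityOne S ∧ ∀ k : ℕ, Tendsto (a k) (atTop ⊓ 𝓟 S) (𝓝 0) := by
  choose Sset hSd hSt using h
  have hdc : ∀ k, Tendsto (fun N : ℕ => (dcCount (Sset k) N : ℝ) / N) atTop (𝓝 0) :=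
    fun k => (hasDensityOne_iff _).1 (hSd k)
  -- choose thresholds
  have hN0 : ∀ k : ℕ, ∃ M : ℕ, k + 1 ≤ M ∧
      ∀ N : ℕ, M ≤ N → (dcCount (Sset k) N : ℝ) ≤ (1/2 : ℝ)^k * N := by
    intro k
    have hpos : (0:ℝ) < (1/2 : ℝ)^k := by positivity
    have hev : ∀ᶠ N : ℕ in atTop, (dcCount (Sset k) N : ℝ) / N < (1/2:ℝ)^k :=
      (hdc k).eventually_lt_const hpos
    obtain ⟨M, hM⟩ := (hev.and (eventually_ge_atTop 1)).exists_forall_of_atTop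
    refine ⟨max M (k + 1), le_max_right _ _, fun N hN => ?_⟩
    have hMN : M ≤ N := le_trans (le_max_left _ _) hN
    obtain ⟨h1, h2⟩ := hM N hMN
    have hNpos : (0:ℝ) < N := by exact_mod_cast h2
    calc (dcCount (Sset k) N : ℝ) = (dcCount (Sset k) N : ℝ) / N * N := by field_simp
      _ ≤ (1/2:ℝ)^k * N := by nlinarith [h1.le]
  choose N0 hN0a hN0b using hN0
  set S : Set ℕ := {n | ∀ k, N0 k ≤ n → n ∈ Sset k} with hS
  refine ⟨S, ?_, ?_⟩
  · -- density one
    rw [hasDensityOne_iff, NormedAddCommGroup.tendsto_nhds_zero]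
    intro ε hε
    obtain ⟨K, hK⟩ : ∃ K : ℕ, 2 * (1/2:ℝ)^K < ε/2 := by
      have ht : Tendsto (fun K : ℕ => 2 * (1/2:ℝ)^K) atTop (𝓝 0) := by
        simpa using (tendsto_pow_atTop_nhds_zero_of_lt_one (by norm_num) (by norm_num)
          : Tendsto (fun K : ℕ => (1/2:ℝ)^K) atTop (𝓝 0)).const_mul 2
      exact (ht.eventually_lt_const (by positivity)).exists
    have hsumt : Tendsto (fun N : ℕ => ∑ k ∈ Finset.range K, (dcCount (Sset k) N : ℝ) / N)
        atTop (𝓝 0) := by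
      have := tendsto_finset_sum (Finset.range K)
        (fun k _ => hdc k)
      simpa using this
    filter_upwards [hsumt.eventually_lt_const (half_pos hε),
      eventually_ge_atTop (max K 1)] with N h1 h2
    have hK_le : K ≤ N := le_trans (le_max_left _ _) h2
    have hNpos : (0:ℝ) < N := by
      have : 1 ≤ N := le_trans (le_max_right _ _) h2
      exact_mod_cast this
    -- covering bound
    have cover : (Finset.range N).filter (fun n => n ∉ S) ⊆
        (Finset.range N).biUnion
          (fun k => (Finset.range N).filter (fun n => N0 k ≤ n ∧ n ∉ Sset k)) := by
      intro n hn
      simp only [Finset.mem_filter, Finset.mem_range, hS, Set.mem_setOf_eq] at hn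
      obtain ⟨hnN, hns⟩ := hn
      push_neg at hns
      obtain ⟨k, hk1, hk2⟩ := hns
      have hkN : k < N := by
        have : k + 1 ≤ n := le_trans (hN0a k) hk1
        omega
      exact Finset.mem_biUnion.2 ⟨k, Finset.mem_range.2 hkN,
        Finset.mem_filter.2 ⟨Finset.mem_range.2 hnN, hk1, hk2⟩⟩
    have tbound : ∀ k : ℕ,
        (((Finset.range N).filter (fun n => N0 k ≤ n ∧ n ∉ Sset k)).card : ℝ)
          ≤ (1/2:ℝ)^k * N := by
      intro k
      by_cases hc : N0 k ≤ N
      · have hsub : (Finset.range N).filter (fun n => N0 k ≤ n ∧ n ∉ Sset k)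
            ⊆ (Finset.range N).filter (fun n => n ∉ Sset k) :=
          Finset.monotone_filter_right _ (fun n _ hn => hn.2)
        calc (((Finset.range N).filter (fun n => N0 k ≤ n ∧ n ∉ Sset k)).card : ℝ)
            ≤ (dcCount (Sset k) N : ℝ) := by exact_mod_cast Finset.card_le_card hsub
          _ ≤ (1/2:ℝ)^k * N := hN0b k N hc
      · have : (Finset.range N).filter (fun n => N0 k ≤ n ∧ n ∉ Sset k) = ∅ := by
          apply Finset.filter_false_of_mem
          intro n hn hcon
          have := Finset.mem_range.1 hn
          omega
        rw [this]
        simpa using by positivity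

    have hmain : (dcCount S N : ℝ)
        ≤ (∑ k ∈ Finset.range K, (dcCount (Sset k) N : ℝ)) + 2 * (1/2:ℝ)^K * N := by
      have h1' : (dcCount S N : ℝ)
          ≤ ∑ k ∈ Finset.range N,
              (((Finset.range N).filter (fun n => N0 k ≤ n ∧ n ∉ Sset k)).card : ℝ) := by
        have := le_trans (Finset.card_le_card cover) (Finset.card_biUnion_le)
        exact_mod_cast this
      have hsplit : ∑ k ∈ Finset.range N,
            (((Finset.range N).filter (fun n => N0 k ≤ n ∧ n ∉ Sset k)).card : ℝ)
          = (∑ k ∈ Finset.range K,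
              (((Finset.range N).filter (fun n => N0 k ≤ n ∧ n ∉ Sset k)).card : ℝ))
            + ∑ k ∈ Finset.Ico K N,
              (((Finset.range N).filter (fun n => N0 k ≤ n ∧ n ∉ Sset k)).card : ℝ) := by
        rw [Finset.range_eq_Ico, ← Finset.sum_Ico_consecutive _ (Nat.zero_le K) hK_le,
          ← Finset.range_eq_Ico]
      have hA : (∑ k ∈ Finset.range K,
            (((Finset.range N).filter (fun n => N0 k ≤ n ∧ n ∉ Sset k)).card : ℝ))
          ≤ ∑ k ∈ Finset.range K, (dcCount (Sset k) N : ℝ) := by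
        apply Finset.sum_le_sum
        intro k _
        have hsub : (Finset.range N).filter (fun n => N0 k ≤ n ∧ n ∉ Sset k)
            ⊆ (Finset.range N).filter (fun n => n ∉ Sset k) :=
          Finset.monotone_filter_right _ (fun n _ hn => hn.2)
        exact_mod_cast Finset.card_le_card hsub
      have hB : (∑ k ∈ Finset.Ico K N,
            (((Finset.range N).filter (fun n => N0 k ≤ n ∧ n ∉ Sset k)).card : ℝ))
          ≤ 2 * (1/2:ℝ)^K * N := by
        calc (∑ k ∈ Finset.Ico K N,
              (((Finset.range N).filter (fun n => N0 k ≤ n ∧ n ∉ Sset k)).card : ℝ))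
            ≤ ∑ k ∈ Finset.Ico K N, (1/2:ℝ)^k * N :=
              Finset.sum_le_sum (fun k _ => tbound k)
          _ = (∑ k ∈ Finset.Ico K N, (1/2:ℝ)^k) * N := by rw [Finset.sum_mul]
          _ ≤ 2 * (1/2:ℝ)^K * N := by
              apply mul_le_mul_of_nonneg_right _ hNpos.le
              have : (∑ k ∈ Finset.Ico K N, (1/2:ℝ)^k)
                  = (1/2:ℝ)^K * ∑ j ∈ Finset.range (N - K), (1/2:ℝ)^j := by
                rw [Finset.sum_Ico_eq_sum_range, Finset.mul_sum]
                exact Finset.sum_congr rfl (fun j _ => by rw [← pow_add])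
              rw [this]
              have h2le : (∑ j ∈ Finset.range (N - K), (1/2:ℝ)^j) ≤ 2 := by
                simpa using sum_geometric_two_le (N - K)
              calc (1/2:ℝ)^K * ∑ j ∈ Finset.range (N - K), (1/2:ℝ)^j
                  ≤ (1/2:ℝ)^K * 2 := by
                    apply mul_le_mul_of_nonneg_left h2le (by positivity)
                _ = 2 * (1/2:ℝ)^K := by ring
      calc (dcCount S N : ℝ) ≤ _ := h1'
        _ = _ := hsplit
        _ ≤ _ := add_le_add hA hB
    have hfin : (dcCount S N : ℝ) / N
        ≤ (∑ k ∈ Finset.range K, (dcCount (Sset k) N : ℝ) / N) + 2 * (1/2:ℝ)^K := by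
      rw [div_le_iff₀ hNpos]
      calc (dcCount S N : ℝ)
          ≤ (∑ k ∈ Finset.range K, (dcCount (Sset k) N : ℝ)) + 2 * (1/2:ℝ)^K * N := hmain
        _ = ((∑ k ∈ Finset.range K, (dcCount (Sset k) N : ℝ) / N) + 2 * (1/2:ℝ)^K) * N := by
            rw [add_mul, Finset.sum_mul]
            congr 1
            exact Finset.sum_congr rfl (fun k _ => by field_simp)
    have hnn : (0:ℝ) ≤ (dcCount S N : ℝ) / N := by positivity
    rw [Real.norm_of_nonneg hnn]
    calc (dcCount S N : ℝ) / N
        ≤ (∑ k ∈ Finset.range K, (dcCount (Sset k) N : ℝ) / N) + 2 * (1/2:ℝ)^K := hfin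
      _ < ε/2 + ε/2 := add_lt_add h1 hK
      _ = ε := by ring
  · -- convergence along S
    intro k
    have hle : atTop ⊓ 𝓟 S ≤ atTop ⊓ 𝓟 (Sset k) := by
      refine le_inf inf_le_left (le_principal_iff.2 ?_)
      have hmem : {n : ℕ | N0 k ≤ n} ∩ S ∈ atTop ⊓ 𝓟 S :=
        inter_mem_inf (mem_atTop (N0 k)) (mem_principal_self S)
      exact mem_of_superset hmem (fun n hn => hn.2 k hn.1)
    exact (hSt k).mono_left hle
end

section
/- Let f : [0,∞) → ℝ be nonnegative and nondecreasing such that the Laplace–Stieltjes transform ∫₀^∞ e^{−τλ} df(λ) converges for all τ > 0 and satisfies τ·∫₀^∞ e^{−τλ} df(λ) → A as τ → 0⁺. Then f(Λ)/Λ → A as Λ → ∞. -/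
open MeasureTheory Filter Topology

namespace KaramataAux

open intervalIntegral in
private lemma ipow (i : ℕ) : ∫ x in (0:ℝ)..1, x ^ i = 1/((i:ℝ)+1) := by
  rw [integral_pow]; norm_num

open intervalIntegral in
private lemma iinv {a b : ℝ} (ha : 0 < a) (hb : 0 < b) :
    ∫ x in a..b, x⁻¹ = Real.log (b/a) := integral_inv_of_pos ha hb

/-- Limit for the dilated transforms: `τ ∫ e^{-(n+1)τ l} dμ → A/(n+1)`. -/
lemma mono_lim (f : StieltjesFunction ℝ) (A : ℝ)
    (habel : Tendsto (fun τ : ℝ => τ * ∫ l in Set.Ici (0:ℝ), Real.exp (-τ * l) ∂f.measure)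
      (𝓝[>] 0) (𝓝 A)) (n : ℕ) :
    Tendsto (fun τ : ℝ => τ * ∫ l in Set.Ici (0:ℝ),
        Real.exp (-(((n:ℝ)+1) * τ) * l) ∂f.measure) (𝓝[>] 0) (𝓝 (A / ((n:ℝ)+1))) := by
  have hn : ((n:ℝ)+1) ≠ 0 := by positivity
  have hmul : Tendsto (fun τ : ℝ => ((n:ℝ)+1) * τ) (𝓝[>] (0:ℝ)) (𝓝[>] (0:ℝ)) := by
    apply tendsto_nhdsWithin_of_tendsto_nhds_of_eventually_within
    · have h0 : Tendsto (fun τ : ℝ => ((n:ℝ)+1) * τ) (𝓝 0) (𝓝 0) := by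
        simpa using (continuous_mul_left ((n:ℝ)+1)).tendsto' (0:ℝ) 0 (by simp)
      exact h0.mono_left nhdsWithin_le_nhds
    · filter_upwards [self_mem_nhdsWithin] with τ (hτ : (0:ℝ) < τ)
      have : (0:ℝ) < ((n:ℝ)+1) * τ := by positivity
      exact this
  have h2 := (habel.comp hmul).const_mul (((n:ℝ)+1)⁻¹)
  have heq : ∀ τ : ℝ,
      (((n:ℝ)+1)⁻¹) * ((fun τ : ℝ => τ * ∫ l in Set.Ici (0:ℝ),
          Real.exp (-τ * l) ∂f.measure) (((n:ℝ)+1) * τ))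
      = τ * ∫ l in Set.Ici (0:ℝ), Real.exp (-(((n:ℝ)+1) * τ) * l) ∂f.measure := by
    intro τ
    simp only
    rw [← mul_assoc, inv_mul_cancel_left₀ hn]
  rw [div_eq_inv_mul]
  exact Tendsto.congr heq h2

/-- Integrability of `e^{-τl} g(e^{-τl})` for continuous `g`. -/
lemma integrable_comp (f : StieltjesFunction ℝ)
    (hint : ∀ τ : ℝ, 0 < τ →
      IntegrableOn (fun l => Real.exp (-τ * l)) (Set.Ici 0) f.measure)
    {τ : ℝ} (hτ : 0 < τ) {g : ℝ → ℝ} (hg : Continuous g) :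
    IntegrableOn (fun l => Real.exp (-τ * l) * g (Real.exp (-τ * l)))
      (Set.Ici 0) f.measure := by
  obtain ⟨C, hC⟩ := (isCompact_Icc (a := (0:ℝ)) (b := 1)).exists_bound_of_continuousOn
    hg.continuousOn
  have he : Continuous fun l : ℝ => Real.exp (-τ * l) :=
    Real.continuous_exp.comp (continuous_const.mul continuous_id)
  refine Integrable.mono' ((hint τ hτ).const_mul C)
    ((he.mul (hg.comp he)).aestronglyMeasurable) ?_
  rw [ae_restrict_iff' measurableSet_Ici]
  refine ae_of_all _ fun l hl => ?_
  have hl0 : (0:ℝ) ≤ l := hl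
  have hx : Real.exp (-τ * l) ∈ Set.Icc (0:ℝ) 1 := by
    constructor
    · exact (Real.exp_pos _).le
    · rw [Real.exp_le_one_iff]; nlinarith
  rw [norm_mul, Real.norm_eq_abs, Real.norm_eq_abs, abs_of_pos (Real.exp_pos _)]
  calc Real.exp (-τ * l) * |g (Real.exp (-τ * l))|
      ≤ Real.exp (-τ * l) * C := by
        refine mul_le_mul_of_nonneg_left ?_ (Real.exp_pos _).le
        simpa [Real.norm_eq_abs] using hC _ hx
    _ = C * Real.exp (-τ * l) := mul_comm _ _

/-- Polynomial step of Karamata's theorem. -/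
lemma poly_lim (f : StieltjesFunction ℝ) (A : ℝ)
    (hint : ∀ τ : ℝ, 0 < τ →
      IntegrableOn (fun l => Real.exp (-τ * l)) (Set.Ici 0) f.measure)
    (habel : Tendsto (fun τ : ℝ => τ * ∫ l in Set.Ici (0:ℝ), Real.exp (-τ * l) ∂f.measure)
      (𝓝[>] 0) (𝓝 A)) (p : Polynomial ℝ) :
    Tendsto (fun τ : ℝ => τ * ∫ l in Set.Ici (0:ℝ),
        Real.exp (-τ * l) * p.eval (Real.exp (-τ * l)) ∂f.measure)
      (𝓝[>] 0) (𝓝 (A * ∫ x in (0:ℝ)..1, p.eval x)) := by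
  set N := p.natDegree + 1 with hN
  have hterm : ∀ (τ : ℝ) (i : ℕ) (l : ℝ),
      Real.exp (-τ * l) * (p.coeff i * Real.exp (-τ * l) ^ i)
        = p.coeff i * Real.exp (-(((i:ℝ)+1) * τ) * l) := by
    intro τ i l
    rw [← Real.exp_nat_mul, mul_left_comm, ← Real.exp_add]
    congr 2
    ring
  have hval : ∫ x in (0:ℝ)..1, p.eval x
      = ∑ i ∈ Finset.range N, p.coeff i * (1/((i:ℝ)+1)) := by
    have : ∀ x : ℝ, p.eval x = ∑ i ∈ Finset.range N, p.coeff i * x ^ i := fun x =>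
      Polynomial.eval_eq_sum_range x
    rw [intervalIntegral.integral_congr (g := fun x => ∑ i ∈ Finset.range N,
      p.coeff i * x ^ i) (fun x _ => this x)]
    rw [intervalIntegral.integral_finset_sum (f := fun i x => p.coeff i * x ^ i) (fun i _ =>
      ((continuous_const.mul (continuous_pow i)).intervalIntegrable _ _))]
    refine Finset.sum_congr rfl fun i _ => ?_
    rw [_root_.intervalIntegral.integral_const_mul, ipow]
  have main : Tendsto (fun τ : ℝ => ∑ i ∈ Finset.range N,
      p.coeff i * (τ * ∫ l in Set.Ici (0:ℝ),
        Real.exp (-(((i:ℝ)+1) * τ) * l) ∂f.measure))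
      (𝓝[>] 0) (𝓝 (∑ i ∈ Finset.range N, p.coeff i * (A / ((i:ℝ)+1)))) :=
    tendsto_finset_sum _ fun i _ => (mono_lim f A habel i).const_mul _
  have hlimeq : A * ∫ x in (0:ℝ)..1, p.eval x
      = ∑ i ∈ Finset.range N, p.coeff i * (A / ((i:ℝ)+1)) := by
    rw [hval, Finset.mul_sum]
    exact Finset.sum_congr rfl fun i _ => by ring
  rw [hlimeq]
  refine main.congr' ?_
  filter_upwards [self_mem_nhdsWithin] with τ (hτ : (0:ℝ) < τ)
  have hir : ∀ i : ℕ, IntegrableOn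
      (fun l => p.coeff i * Real.exp (-(((i:ℝ)+1) * τ) * l)) (Set.Ici 0) f.measure :=
    fun i => (hint (((i:ℝ)+1) * τ) (by positivity)).const_mul _
  have hI : (∫ l in Set.Ici (0:ℝ),
      Real.exp (-τ * l) * p.eval (Real.exp (-τ * l)) ∂f.measure)
      = ∑ i ∈ Finset.range N, p.coeff i * ∫ l in Set.Ici (0:ℝ),
          Real.exp (-(((i:ℝ)+1) * τ) * l) ∂f.measure := by
    have h1 : ∀ l : ℝ, Real.exp (-τ * l) * p.eval (Real.exp (-τ * l))
        = ∑ i ∈ Finset.range N, p.coeff i * Real.exp (-(((i:ℝ)+1) * τ) * l) := by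
      intro l
      rw [Polynomial.eval_eq_sum_range, Finset.mul_sum]
      exact Finset.sum_congr rfl fun i _ => hterm τ i l
    simp_rw [h1]
    rw [integral_finset_sum _ (fun i _ => hir i)]
    exact Finset.sum_congr rfl fun i _ => integral_const_mul _ _
  rw [hI, Finset.mul_sum]
  exact Finset.sum_congr rfl fun i _ => by ring


lemma A_nonneg (f : StieltjesFunction ℝ) (A : ℝ)
    (habel : Tendsto (fun τ : ℝ => τ * ∫ l in Set.Ici (0:ℝ), Real.exp (-τ * l) ∂f.measure)
      (𝓝[>] 0) (𝓝 A)) : 0 ≤ A := by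
  refine ge_of_tendsto habel ?_
  filter_upwards [self_mem_nhdsWithin] with τ (hτ : (0:ℝ) < τ)
  exact mul_nonneg hτ.le (integral_nonneg fun l => (Real.exp_pos _).le)

/-- Continuous-function step of Karamata's theorem. -/
lemma cont_lim (f : StieltjesFunction ℝ) (A : ℝ)
    (hint : ∀ τ : ℝ, 0 < τ →
      IntegrableOn (fun l => Real.exp (-τ * l)) (Set.Ici 0) f.measure)
    (habel : Tendsto (fun τ : ℝ => τ * ∫ l in Set.Ici (0:ℝ), Real.exp (-τ * l) ∂f.measure)
      (𝓝[>] 0) (𝓝 A)) {g : ℝ → ℝ} (hg : Continuous g) :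
    Tendsto (fun τ : ℝ => τ * ∫ l in Set.Ici (0:ℝ),
        Real.exp (-τ * l) * g (Real.exp (-τ * l)) ∂f.measure)
      (𝓝[>] 0) (𝓝 (A * ∫ x in (0:ℝ)..1, g x)) := by
  rw [Metric.tendsto_nhds]
  intro ε hε
  have hA1 : (0:ℝ) < |A| + 1 := by positivity
  set ε' : ℝ := ε / (3 * (|A| + 1)) with hε'def
  have hε'pos : 0 < ε' := by positivity
  have hkey : ε' * (|A| + 1) = ε / 3 := by
    rw [hε'def]; field_simp
  obtain ⟨q, hq⟩ := exists_polynomial_near_of_continuousOn 0 1 g hg.continuousOn ε' hε'pos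
  have hpoly := poly_lim f A hint habel q
  have h1 := Metric.tendsto_nhds.1 hpoly (ε/3) (by positivity)
  have h2 := Metric.tendsto_nhds.1 habel 1 one_pos
  filter_upwards [h1, h2, self_mem_nhdsWithin] with τ hd1 hd2 (hτ : (0:ℝ) < τ)
  rw [Real.dist_eq] at hd1 hd2 ⊢
  -- notation
  set Ig : ℝ := ∫ l in Set.Ici (0:ℝ), Real.exp (-τ * l) * g (Real.exp (-τ * l)) ∂f.measure
  set Iq : ℝ := ∫ l in Set.Ici (0:ℝ),
    Real.exp (-τ * l) * q.eval (Real.exp (-τ * l)) ∂f.measure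
  set L : ℝ := ∫ l in Set.Ici (0:ℝ), Real.exp (-τ * l) ∂f.measure
  have hgint := integrable_comp f hint hτ hg
  have hqint := integrable_comp f hint hτ q.continuous
  have hLpos : 0 ≤ L := integral_nonneg fun l => (Real.exp_pos _).le
  have hτL : τ * L ≤ |A| + 1 := by
    have := abs_sub_lt_iff.1 hd2
    have h' := this.1
    have : τ * L < A + 1 := by linarith
    have : A ≤ |A| := le_abs_self A
    linarith
  have hτLnn : 0 ≤ τ * L := mul_nonneg hτ.le hLpos
  -- bound 1 : |τ * Ig - τ * Iq| ≤ ε/3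
  have hb1 : |τ * Ig - τ * Iq| ≤ ε / 3 := by
    have hdiff : |Ig - Iq| ≤ ε' * L := by
      rw [← integral_sub hgint hqint]
      rw [← Real.norm_eq_abs]
      have : ε' * L = ∫ l in Set.Ici (0:ℝ), ε' * Real.exp (-τ * l) ∂f.measure :=
        (integral_const_mul _ _).symm
      rw [this]
      refine norm_integral_le_of_norm_le ((hint τ hτ).const_mul ε') ?_
      rw [ae_restrict_iff' measurableSet_Ici]
      refine ae_of_all _ fun l hl => ?_
      have hl0 : (0:ℝ) ≤ l := hl
      have hx : Real.exp (-τ * l) ∈ Set.Icc (0:ℝ) 1 :=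
        ⟨(Real.exp_pos _).le, by rw [Real.exp_le_one_iff]; nlinarith⟩
      have := (hq _ hx).le
      calc ‖Real.exp (-τ * l) * g (Real.exp (-τ * l))
            - Real.exp (-τ * l) * q.eval (Real.exp (-τ * l))‖
          = Real.exp (-τ * l) * |g (Real.exp (-τ * l)) - q.eval (Real.exp (-τ * l))| := by
            rw [← mul_sub, Real.norm_eq_abs, abs_mul, abs_of_pos (Real.exp_pos _)]
        _ ≤ Real.exp (-τ * l) * ε' := by
            refine mul_le_mul_of_nonneg_left ?_ (Real.exp_pos _).le
            rw [abs_sub_comm]; exact this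
        _ = ε' * Real.exp (-τ * l) := mul_comm _ _
    calc |τ * Ig - τ * Iq| = τ * |Ig - Iq| := by
          rw [← mul_sub, abs_mul, abs_of_pos hτ]
      _ ≤ τ * (ε' * L) := mul_le_mul_of_nonneg_left hdiff hτ.le
      _ = ε' * (τ * L) := by ring
      _ ≤ ε' * (|A| + 1) := mul_le_mul_of_nonneg_left hτL hε'pos.le
      _ = ε / 3 := hkey
  -- bound 3 : |A * ∫ q - A * ∫ g| ≤ ε/3
  have hb3 : |A * (∫ x in (0:ℝ)..1, q.eval x) - A * ∫ x in (0:ℝ)..1, g x| ≤ ε / 3 := by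
    have hdi : |(∫ x in (0:ℝ)..1, q.eval x) - ∫ x in (0:ℝ)..1, g x| ≤ ε' := by
      rw [← intervalIntegral.integral_sub (q.continuous.intervalIntegrable _ _)
        (hg.intervalIntegrable _ _), ← Real.norm_eq_abs]
      have := intervalIntegral.norm_integral_le_of_norm_le_const
        (C := ε') (f := fun x => q.eval x - g x) (a := 0) (b := 1) ?_
      · simpa using this
      · intro x hx
        have hx' : x ∈ Set.Icc (0:ℝ) 1 := by
          rw [Set.uIoc_of_le (by norm_num : (0:ℝ) ≤ 1)] at hx
          exact ⟨hx.1.le, hx.2⟩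
        exact (hq x hx').le
    calc |A * (∫ x in (0:ℝ)..1, q.eval x) - A * ∫ x in (0:ℝ)..1, g x|
        = |A| * |(∫ x in (0:ℝ)..1, q.eval x) - ∫ x in (0:ℝ)..1, g x| := by
          rw [← mul_sub, abs_mul]
      _ ≤ (|A| + 1) * ε' := by
          refine mul_le_mul (by linarith) hdi (abs_nonneg _) (by positivity)
      _ = ε / 3 := by rw [mul_comm]; exact hkey
  have htri : |τ * Ig - A * ∫ x in (0:ℝ)..1, g x|
      ≤ |τ * Ig - τ * Iq| + |τ * Iq - A * ∫ x in (0:ℝ)..1, q.eval x|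
        + |A * (∫ x in (0:ℝ)..1, q.eval x) - A * ∫ x in (0:ℝ)..1, g x| := by
    have t1 := abs_sub_le (τ * Ig) (τ * Iq) (A * ∫ x in (0:ℝ)..1, g x)
    have t2 := abs_sub_le (τ * Iq) (A * ∫ x in (0:ℝ)..1, q.eval x)
      (A * ∫ x in (0:ℝ)..1, g x)
    linarith
  linarith


/-- The measure-counting limit: `τ μ([0,1/τ]) → A`. -/
lemma measure_lim (f : StieltjesFunction ℝ) (A : ℝ)
    (hint : ∀ τ : ℝ, 0 < τ →
      IntegrableOn (fun l => Real.exp (-τ * l)) (Set.Ici 0) f.measure)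
    (habel : Tendsto (fun τ : ℝ => τ * ∫ l in Set.Ici (0:ℝ), Real.exp (-τ * l) ∂f.measure)
      (𝓝[>] 0) (𝓝 A)) :
    Tendsto (fun τ : ℝ => τ * (f.measure (Set.Icc 0 (1/τ))).toReal) (𝓝[>] 0) (𝓝 A) := by
  have hA : 0 ≤ A := A_nonneg f A habel
  have hA1 : (0:ℝ) < A + 1 := by linarith
  rw [Metric.tendsto_nhds]
  intro ε hε
  set c : ℝ := Real.exp (-1) with hc
  have hc0 : (0:ℝ) < c := Real.exp_pos _
  have hc1 : c < 1 := by rw [hc, Real.exp_lt_one_iff]; norm_num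
  set δ : ℝ := min (min (c/2) ((1-c)/2)) (c * ε / (3 * (A+1))) with hδdef
  have hδ0 : 0 < δ := by
    refine lt_min (lt_min (by positivity) (by linarith)) (by positivity)
  have hδc : δ < c := lt_of_le_of_lt ((min_le_left _ _).trans (min_le_left _ _)) (by linarith)
  have hδ1 : c + δ ≤ 1 := by
    have h1 : δ ≤ min (c/2) ((1-c)/2) := min_le_left _ _
    have h2 := h1.trans (min_le_right (c/2) ((1-c)/2))
    linarith
  have hδε : δ / c ≤ ε / (3 * (A+1)) := by
    have h := min_le_right (min (c/2) ((1-c)/2)) (c * ε / (3 * (A+1)))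
    rw [div_le_iff₀ hc0]
    calc δ ≤ c * ε / (3 * (A+1)) := h
      _ = ε / (3 * (A+1)) * c := by ring
  have hAδ : A * (δ / c) ≤ ε / 3 := by
    calc A * (δ / c) ≤ (A + 1) * (ε / (3 * (A+1))) := by
          refine mul_le_mul (by linarith) hδε (by positivity) (by linarith)
      _ = ε / 3 := by field_simp
  -- the two continuous test functions
  set ramp : ℝ → ℝ → ℝ := fun a x => max 0 (min 1 ((x - a)/δ)) with hrampdef
  set gp : ℝ → ℝ := fun x => ramp (c - δ) x * (max x c)⁻¹ with hgpdef
  set gm : ℝ → ℝ := fun x => ramp c x * (max x c)⁻¹ with hgmdef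
  have hrampc : ∀ a : ℝ, Continuous (ramp a) := fun a =>
    continuous_const.max (continuous_const.min ((continuous_id.sub continuous_const).div_const δ))
  have hmaxpos : ∀ x : ℝ, (0:ℝ) < max x c := fun x => lt_of_lt_of_le hc0 (le_max_right x c)
  have hinvc : Continuous fun x : ℝ => (max x c)⁻¹ :=
    (continuous_id.max continuous_const).inv₀ fun x => (hmaxpos x).ne'
  have hgpc : Continuous gp := (hrampc _).mul hinvc
  have hgmc : Continuous gm := (hrampc _).mul hinvc
  have ramp_nonneg : ∀ a x : ℝ, 0 ≤ ramp a x := fun a x => le_max_left 0 _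
  have ramp_le_one : ∀ a x : ℝ, ramp a x ≤ 1 := fun a x => max_le zero_le_one (min_le_left _ _)
  have ramp_zero : ∀ a x : ℝ, x ≤ a → ramp a x = 0 := by
    intro a x h
    have ht : (x - a)/δ ≤ 0 := div_nonpos_iff.2 (Or.inr ⟨by linarith, hδ0.le⟩)
    exact max_eq_left ((min_le_right _ _).trans ht)
  have ramp_one : ∀ a x : ℝ, a + δ ≤ x → ramp a x = 1 := by
    intro a x h
    have h1 : (1:ℝ) ≤ (x - a)/δ := (one_le_div hδ0).2 (by linarith)
    show max 0 (min 1 ((x - a)/δ)) = 1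
    rw [min_eq_left h1]
    exact max_eq_right zero_le_one
  have gp_nonneg : ∀ x : ℝ, 0 ≤ gp x := fun x =>
    mul_nonneg (ramp_nonneg _ _) (inv_nonneg.2 (hmaxpos x).le)
  have gm_nonneg : ∀ x : ℝ, 0 ≤ gm x := fun x =>
    mul_nonneg (ramp_nonneg _ _) (inv_nonneg.2 (hmaxpos x).le)
  -- integral bounds
  have hloge : Real.log (1/c) = 1 := by
    rw [one_div, Real.log_inv, hc, Real.log_exp]; norm_num
  have int_gp : ∫ x in (0:ℝ)..1, gp x ≤ 1 + δ / c := by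
    have h1 := intervalIntegral.integral_add_adjacent_intervals (a := (0:ℝ)) (b := c - δ)
      (c := c) (μ := volume) (hgpc.intervalIntegrable _ _) (hgpc.intervalIntegrable _ _)
    have h2 := intervalIntegral.integral_add_adjacent_intervals (a := (0:ℝ)) (b := c)
      (c := 1) (μ := volume) (hgpc.intervalIntegrable _ _) (hgpc.intervalIntegrable _ _)
    have e1 : ∫ x in (0:ℝ)..(c - δ), gp x = 0 := by
      rw [intervalIntegral.integral_congr (g := fun _ => (0:ℝ)) ?_]
      · simp
      · intro x hx
        rw [Set.uIcc_of_le (by linarith : (0:ℝ) ≤ c - δ)] at hx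
        show ramp (c - δ) x * (max x c)⁻¹ = 0
        rw [ramp_zero _ _ hx.2, zero_mul]
    have e2 : ∫ x in (c - δ)..c, gp x ≤ δ / c := by
      have hb : ∫ x in (c - δ)..c, gp x ≤ ∫ x in (c - δ)..c, c⁻¹ := by
        refine intervalIntegral.integral_mono_on (by linarith) (hgpc.intervalIntegrable _ _)
          (intervalIntegrable_const) fun x hx => ?_
        calc gp x ≤ 1 * (max x c)⁻¹ :=
              mul_le_mul_of_nonneg_right (ramp_le_one _ _) (inv_nonneg.2 (hmaxpos x).le)
          _ = (max x c)⁻¹ := one_mul _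
          _ ≤ c⁻¹ := by
              refine inv_anti₀ hc0 (le_max_right x c)
      have : ∫ x in (c - δ)..c, (c:ℝ)⁻¹ = δ / c := by
        rw [intervalIntegral.integral_const, smul_eq_mul]
        field_simp; ring
      linarith [hb, this.le, this.ge]
    have e3 : ∫ x in c..(1:ℝ), gp x = 1 := by
      have : ∫ x in c..(1:ℝ), gp x = ∫ x in c..(1:ℝ), x⁻¹ := by
        refine intervalIntegral.integral_congr fun x hx => ?_
        rw [Set.uIcc_of_le hc1.le] at hx
        show ramp (c - δ) x * (max x c)⁻¹ = x⁻¹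
        rw [ramp_one _ _ (by linarith [hx.1]), one_mul, max_eq_left hx.1]
      rw [this, iinv hc0 one_pos, hloge]
    linarith
  have int_gm : (1:ℝ) - δ / c ≤ ∫ x in (0:ℝ)..1, gm x := by
    have h1 := intervalIntegral.integral_add_adjacent_intervals (a := (0:ℝ)) (b := c)
      (c := c + δ) (μ := volume) (hgmc.intervalIntegrable _ _) (hgmc.intervalIntegrable _ _)
    have h2 := intervalIntegral.integral_add_adjacent_intervals (a := (0:ℝ)) (b := c + δ)
      (c := 1) (μ := volume) (hgmc.intervalIntegrable _ _) (hgmc.intervalIntegrable _ _)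
    have e1 : ∫ x in (0:ℝ)..c, gm x = 0 := by
      rw [intervalIntegral.integral_congr (g := fun _ => (0:ℝ)) ?_]
      · simp
      · intro x hx
        rw [Set.uIcc_of_le hc0.le] at hx
        show ramp c x * (max x c)⁻¹ = 0
        rw [ramp_zero _ _ hx.2, zero_mul]
    have e2 : (0:ℝ) ≤ ∫ x in c..(c+δ), gm x :=
      intervalIntegral.integral_nonneg (by linarith) fun x _ => gm_nonneg x
    have e3 : (1:ℝ) - δ / c ≤ ∫ x in (c+δ)..(1:ℝ), gm x := by
      have heq : ∫ x in (c+δ)..(1:ℝ), gm x = ∫ x in (c+δ)..(1:ℝ), x⁻¹ := by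
        refine intervalIntegral.integral_congr fun x hx => ?_
        rw [Set.uIcc_of_le hδ1] at hx
        show ramp c x * (max x c)⁻¹ = x⁻¹
        rw [ramp_one _ _ hx.1, one_mul, max_eq_left (by linarith [hx.1])]
      have hlog : Real.log ((c+δ)/c) ≤ δ / c := by
        have := Real.log_le_sub_one_of_pos (x := (c+δ)/c) (by positivity)
        have hrw : (c+δ)/c - 1 = δ / c := by field_simp; ring
        linarith [hrw ▸ this]
      have hsplit : Real.log ((c+δ)/c) = Real.log (c+δ) + 1 := by
        rw [Real.log_div (by positivity) hc0.ne', hc, Real.log_exp]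
        ring
      have hlog2 : Real.log (c+δ) ≤ δ / c - 1 := by linarith
      rw [heq, iinv (by positivity) one_pos]
      rw [Real.log_div one_ne_zero (by positivity), Real.log_one]
      linarith
    linarith
  -- limits for the two test functions
  have hp := Metric.tendsto_nhds.1 (cont_lim f A hint habel hgpc) (ε/3) (by positivity)
  have hm := Metric.tendsto_nhds.1 (cont_lim f A hint habel hgmc) (ε/3) (by positivity)
  filter_upwards [hp, hm, self_mem_nhdsWithin] with τ hdp hdm (hτ : (0:ℝ) < τ)
  rw [Real.dist_eq] at hdp hdm ⊢
  -- sandwich at fixed τ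
  have hgpint := integrable_comp f hint hτ hgpc
  have hgmint := integrable_comp f hint hτ hgmc
  have hindint : IntegrableOn ((Set.Icc (0:ℝ) (1/τ)).indicator (1 : ℝ → ℝ)) (Set.Ici 0) f.measure := by
    rw [IntegrableOn, integrable_indicator_iff measurableSet_Icc]
    refine integrableOn_const (ne_of_lt ?_)
    calc (f.measure.restrict (Set.Ici 0)) (Set.Icc 0 (1/τ))
        = f.measure (Set.Icc 0 (1/τ) ∩ Set.Ici 0) := Measure.restrict_apply measurableSet_Icc
      _ ≤ f.measure (Set.Icc 0 (1/τ)) := measure_mono Set.inter_subset_left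
      _ < ⊤ := by rw [f.measure_Icc]; exact ENNReal.ofReal_lt_top
  have hIind : ∫ l in Set.Ici (0:ℝ), (Set.Icc (0:ℝ) (1/τ)).indicator (1 : ℝ → ℝ) l ∂f.measure
      = (f.measure (Set.Icc 0 (1/τ))).toReal := by
    rw [MeasureTheory.integral_indicator_one measurableSet_Icc, measureReal_def,
      Measure.restrict_apply measurableSet_Icc]
    congr 1
    rw [Set.inter_eq_left.2 Set.Icc_subset_Ici_self]
  -- pointwise bounds
  have hsand : ∀ l ∈ Set.Ici (0:ℝ),
      Real.exp (-τ * l) * gm (Real.exp (-τ * l)) ≤ (Set.Icc (0:ℝ) (1/τ)).indicator (1 : ℝ → ℝ) l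
      ∧ (Set.Icc (0:ℝ) (1/τ)).indicator (1 : ℝ → ℝ) l ≤ Real.exp (-τ * l) * gp (Real.exp (-τ * l)) := by
    intro l hl
    have hl0 : (0:ℝ) ≤ l := hl
    set x : ℝ := Real.exp (-τ * l) with hx
    have hx0 : 0 < x := Real.exp_pos _
    by_cases hcase : l ≤ 1/τ
    · have hmem : l ∈ Set.Icc (0:ℝ) (1/τ) := ⟨hl0, hcase⟩
      rw [Set.indicator_of_mem hmem, Pi.one_apply]
      have hxc : c ≤ x := by
        rw [hc, hx, Real.exp_le_exp]
        rw [le_div_iff₀ hτ] at hcase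
        nlinarith
      have hmax : max x c = x := max_eq_left hxc
      constructor
      · show x * (ramp c x * (max x c)⁻¹) ≤ 1
        rw [hmax, mul_comm (ramp c x), ← mul_assoc, mul_inv_cancel₀ hx0.ne', one_mul]
        exact ramp_le_one _ _
      · show (1:ℝ) ≤ x * (ramp (c - δ) x * (max x c)⁻¹)
        rw [hmax, ramp_one _ _ (by linarith), one_mul, mul_inv_cancel₀ hx0.ne']
    · have hmem : l ∉ Set.Icc (0:ℝ) (1/τ) := fun h => hcase h.2
      rw [Set.indicator_of_notMem hmem]
      have hxc : x ≤ c := by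
        rw [hc, hx, Real.exp_le_exp]
        push_neg at hcase
        rw [div_lt_iff₀ hτ] at hcase
        nlinarith
      constructor
      · show x * (ramp c x * (max x c)⁻¹) ≤ 0
        rw [ramp_zero _ _ hxc, zero_mul, mul_zero]
      · exact mul_nonneg hx0.le (gp_nonneg x)
  have hlow : ∫ l in Set.Ici (0:ℝ), Real.exp (-τ * l) * gm (Real.exp (-τ * l)) ∂f.measure
      ≤ (f.measure (Set.Icc 0 (1/τ))).toReal := by
    rw [← hIind]
    exact setIntegral_mono_on hgmint hindint measurableSet_Ici fun l hl => (hsand l hl).1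
  have hhigh : (f.measure (Set.Icc 0 (1/τ))).toReal
      ≤ ∫ l in Set.Ici (0:ℝ), Real.exp (-τ * l) * gp (Real.exp (-τ * l)) ∂f.measure := by
    rw [← hIind]
    exact setIntegral_mono_on hindint hgpint measurableSet_Ici fun l hl => (hsand l hl).2
  -- combine
  have hub : A * ∫ x in (0:ℝ)..1, gp x ≤ A + ε/3 := by
    calc A * ∫ x in (0:ℝ)..1, gp x ≤ A * (1 + δ/c) := mul_le_mul_of_nonneg_left int_gp hA
      _ = A + A * (δ/c) := by ring
      _ ≤ A + ε/3 := by linarith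
  have hlb : A - ε/3 ≤ A * ∫ x in (0:ℝ)..1, gm x := by
    calc A - ε/3 ≤ A - A * (δ/c) := by linarith
      _ = A * (1 - δ/c) := by ring
      _ ≤ A * ∫ x in (0:ℝ)..1, gm x := mul_le_mul_of_nonneg_left int_gm hA
  have hup : τ * (f.measure (Set.Icc 0 (1/τ))).toReal
      ≤ τ * ∫ l in Set.Ici (0:ℝ), Real.exp (-τ * l) * gp (Real.exp (-τ * l)) ∂f.measure :=
    mul_le_mul_of_nonneg_left hhigh hτ.le
  have hdown : τ * ∫ l in Set.Ici (0:ℝ), Real.exp (-τ * l) * gm (Real.exp (-τ * l)) ∂f.measure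
      ≤ τ * (f.measure (Set.Icc 0 (1/τ))).toReal :=
    mul_le_mul_of_nonneg_left hlow hτ.le
  have hp' := abs_sub_lt_iff.1 hdp
  have hm' := abs_sub_lt_iff.1 hdm
  rw [abs_sub_lt_iff]
  constructor
  · calc τ * (f.measure (Set.Icc 0 (1/τ))).toReal - A
        ≤ τ * (∫ l in Set.Ici (0:ℝ),
            Real.exp (-τ * l) * gp (Real.exp (-τ * l)) ∂f.measure) - A := by linarith
      _ < ε := by linarith [hp'.1, hub]
  · calc A - τ * (f.measure (Set.Icc 0 (1/τ))).toReal
        ≤ A - τ * ∫ l in Set.Ici (0:ℝ),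
            Real.exp (-τ * l) * gm (Real.exp (-τ * l)) ∂f.measure := by linarith
      _ < ε := by linarith [hm'.2, hlb]

end KaramataAux


/-- Karamata's Tauberian theorem (index 1): if the Laplace–Stieltjes transform of a
nonnegative nondecreasing `f` satisfies `τ ∫₀^∞ e^{-τλ} df(λ) → A` as `τ → 0⁺`,
then `f(Λ)/Λ → A` as `Λ → ∞`. -/
theorem karamata_tauberian (f : StieltjesFunction ℝ) (hpos : ∀ x : ℝ, 0 ≤ x → 0 ≤ f x)
    (A : ℝ)
    (hint : ∀ τ : ℝ, 0 < τ →
      IntegrableOn (fun l => Real.exp (-τ * l)) (Set.Ici 0) f.measure)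
    (habel : Tendsto (fun τ : ℝ => τ * ∫ l in Set.Ici (0:ℝ), Real.exp (-τ * l) ∂f.measure)
      (𝓝[>] 0) (𝓝 A)) :
    Tendsto (fun Λ : ℝ => f Λ / Λ) atTop (𝓝 A) := by
  have hm := KaramataAux.measure_lim f A hint habel
  have h1Λ : Tendsto (fun Λ : ℝ => 1/Λ) atTop (𝓝[>] (0:ℝ)) := by
    apply tendsto_nhdsWithin_of_tendsto_nhds_of_eventually_within
    · simpa [one_div] using tendsto_inv_atTop_zero
    · filter_upwards [eventually_gt_atTop (0:ℝ)] with Λ hΛ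
      exact one_div_pos.2 hΛ
  have h2 := hm.comp h1Λ
  have h3 : Tendsto (fun Λ : ℝ => (f Λ - Function.leftLim f 0) / Λ) atTop (𝓝 A) := by
    refine h2.congr' ?_
    filter_upwards [eventually_gt_atTop (0:ℝ)] with Λ hΛ
    have hlle : Function.leftLim f 0 ≤ f Λ := f.mono.leftLim_le hΛ.le
    simp only [Function.comp_apply, one_div_one_div]
    rw [StieltjesFunction.measure_Icc, ENNReal.toReal_ofReal (by linarith)]
    rw [one_div, inv_mul_eq_div]
  have h4 : Tendsto (fun Λ : ℝ => Function.leftLim f 0 / Λ) atTop (𝓝 (0:ℝ)) := by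
    have := tendsto_inv_atTop_zero.const_mul (Function.leftLim (f : ℝ → ℝ) 0)
    simpa [div_eq_mul_inv] using this
  have h5 := h3.add h4
  have h6 : ∀ Λ : ℝ, (f Λ - Function.leftLim f 0) / Λ + Function.leftLim f 0 / Λ = f Λ / Λ := by
    intro Λ
    rw [← add_div, sub_add_cancel]
  simpa using h5.congr h6
end

section
/- Let Γ be a group with a finite symmetric generating set, and let d be the associated word metric, with balls B_R = {g : d(g,e) ≤ R}. Suppose a family of maps F_g : X → X (g ∈ Γ) on a measure space (X, m), with F_g ∘ F_h = F_{gh}, has the equidistribution property: for every x₀ ∈ X and all bounded measurable U, V ⊆ X with m(V) > 0, |{g ∈ B_R : F_g(x₀) ∈ U}| / |{g ∈ B_R : F_g(x₀) ∈ V}| → m(U)/m(V) as R → ∞. Then any finite F_Γ-invariant measure ν on X that is absolutely continuous with bounded density with respect to m and for which the equidistribution counts are positive for all large R must satisfy: for all bounded measurable U, V with m(V) > 0 and ν(V) > 0, ν(U)/ν(V) = m(U)/m(V). -/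
open MeasureTheory Filter Topology ENNReal

theorem equidistribution_rigidity
    {Γ X : Type*} [Group Γ] [MeasurableSpace X]
    (S : Finset Γ) (hsym : ∀ s ∈ S, s⁻¹ ∈ S)
    (hgen : Subgroup.closure (S : Set Γ) = ⊤)
    (B : ℕ → Set Γ)
    (hB : ∀ R : ℕ, B R =
      {g : Γ | ∃ l : List Γ, (∀ x ∈ l, x ∈ S) ∧ l.length ≤ R ∧ l.prod = g})
    (F : Γ → X → X) (hmeas : ∀ g, Measurable (F g))
    (hhom : ∀ g h : Γ, F g ∘ F h = F (g * h))
    (m : Measure X)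
    (hequi : ∀ x₀ : X, ∀ U V : Set X, MeasurableSet U → MeasurableSet V →
      m U < ⊤ → 0 < m V → m V < ⊤ →
      Tendsto (fun R : ℕ =>
          (Nat.card {g : Γ // g ∈ B R ∧ F g x₀ ∈ U} : ℝ) /
            (Nat.card {g : Γ // g ∈ B R ∧ F g x₀ ∈ V} : ℝ)) atTop
        (𝓝 ((m U).toReal / (m V).toReal)))
    (hpos : ∀ x₀ : X, ∀ V : Set X, MeasurableSet V → 0 < m V → m V < ⊤ →
      ∀ᶠ R in atTop, 0 < Nat.card {g : Γ // g ∈ B R ∧ F g x₀ ∈ V})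
    (ν : Measure X) [IsFiniteMeasure ν]
    (hinv : ∀ g : Γ, ∀ A : Set X, MeasurableSet A → ν (F g ⁻¹' A) = ν A)
    (hac : ∃ C : ℝ≥0∞, C ≠ ⊤ ∧ ∃ ρ : X → ℝ≥0∞, Measurable ρ ∧ (∀ x, ρ x ≤ C) ∧
      ν = m.withDensity ρ) :
    ∀ U V : Set X, MeasurableSet U → MeasurableSet V →
      m U < ⊤ → 0 < m V → m V < ⊤ → 0 < ν V →
      ν U / ν V = m U / m V := by
  classical
  obtain ⟨C, hCtop, ρ, hρmeas, hρC, hνdef⟩ := hac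
  intro U V hU hV hmU hmV0 hmVtop hνV
  -- the balls are finite
  have hBfin : ∀ R, (B R).Finite := by
    intro R
    rw [hB]
    apply Set.Finite.subset
      ((List.finite_length_le (↥S) R).image (fun l => (l.map Subtype.val).prod))
    rintro g ⟨l, hl, hlen, hprod⟩
    refine ⟨l.attach.map (fun x => (⟨x.1, hl x.1 x.2⟩ : ↥S)), by simpa using hlen, ?_⟩
    simp only [List.map_map]
    have : (l.attach.map (Subtype.val ∘ fun x => (⟨x.1, hl x.1 x.2⟩ : ↥S))) = l := by
      simp [Function.comp]
    rw [this, hprod]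
  set T : ℕ → Finset Γ := fun R => (hBfin R).toFinset with hT
  have hTmem : ∀ R (g : Γ), g ∈ T R ↔ g ∈ B R := fun R g => Set.Finite.mem_toFinset _
  have hTone : ∀ R, (1 : Γ) ∈ T R := by
    intro R
    rw [hTmem, hB]
    exact ⟨[], by simp⟩
  -- counts
  set c : ℕ → Set X → X → ℕ :=
    fun R A x => ((T R).filter (fun g => F g x ∈ A)).card with hc
  have hcard : ∀ (R : ℕ) (A : Set X) (x : X),
      Nat.card {g : Γ // g ∈ B R ∧ F g x ∈ A} = c R A x := by
    intro R A x
    have h1 : Nat.card {g : Γ // g ∈ B R ∧ F g x ∈ A}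
        = Set.ncard {g : Γ | g ∈ B R ∧ F g x ∈ A} :=
      Nat.card_coe_set_eq _
    have h2 : {g : Γ | g ∈ B R ∧ F g x ∈ A}
        = ↑((T R).filter (fun g => F g x ∈ A)) := by
      ext g; simp [hTmem]
    rw [h1, h2, Set.ncard_coe_finset]
  have hcle : ∀ (R : ℕ) (A : Set X) (x : X), c R A x ≤ (T R).card :=
    fun R A x => Finset.card_filter_le _ _
  -- sum representations
  have hcsumE : ∀ (R : ℕ) (A : Set X) (x : X),
      ((c R A x : ℕ) : ℝ≥0∞) = ∑ g ∈ T R, (F g ⁻¹' A).indicator (1 : X → ℝ≥0∞) x := by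
    intro R A x
    simp only [hc, Finset.card_filter]
    push_cast
    refine Finset.sum_congr rfl (fun g _ => ?_)
    by_cases h : F g x ∈ A <;> simp [Set.indicator, h]
  have hcsumR : ∀ (R : ℕ) (A : Set X) (x : X),
      ((c R A x : ℕ) : ℝ) = ∑ g ∈ T R, (if F g x ∈ A then (1:ℝ) else 0) := by
    intro R A x
    simp only [hc, Finset.card_filter]
    push_cast
    rfl
  have hmeasE : ∀ (R : ℕ) (A : Set X), MeasurableSet A →
      Measurable (fun x => ((c R A x : ℕ) : ℝ≥0∞)) := by
    intro R A hA
    simp only [hcsumE]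
    exact Finset.measurable_sum _ (fun g _ =>
      (measurable_const.indicator ((hmeas g) hA)))
  have hmeasR : ∀ (R : ℕ) (A : Set X), MeasurableSet A →
      Measurable (fun x => ((c R A x : ℕ) : ℝ)) := by
    intro R A hA
    simp only [hcsumR]
    exact Finset.measurable_sum _ (fun g _ =>
      (Measurable.ite ((hmeas g) hA) measurable_const measurable_const))
  -- integral of counts
  have hint : ∀ (R : ℕ) (A : Set X), MeasurableSet A →
      ∫⁻ x, ((c R A x : ℕ) : ℝ≥0∞) ∂ν = ((T R).card : ℝ≥0∞) * ν A := by
    intro R A hA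
    simp only [hcsumE]
    rw [lintegral_finset_sum (T R)
      (f := fun g x => (F g ⁻¹' A).indicator (1 : X → ℝ≥0∞) x)
      (fun g _ => measurable_const.indicator ((hmeas g) hA))]
    have : ∀ g ∈ T R, ∫⁻ x, (F g ⁻¹' A).indicator (1 : X → ℝ≥0∞) x ∂ν = ν A := by
      intro g _
      rw [lintegral_indicator_one ((hmeas g) hA), hinv g A hA]
    rw [Finset.sum_congr rfl this, Finset.sum_const, nsmul_eq_mul]
  have hTcard0 : ∀ R, ((T R).card : ℝ≥0∞) ≠ 0 := by
    intro R
    simp only [ne_eq, Nat.cast_eq_zero, Finset.card_eq_zero]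
    exact fun h => by simpa [h] using hTone R
  have hTcardtop : ∀ R, ((T R).card : ℝ≥0∞) ≠ ⊤ := fun R => ENNReal.natCast_ne_top _
  -- the constant
  set L : ℝ := (m U).toReal / (m V).toReal with hL
  have hL0 : 0 ≤ L := div_nonneg ENNReal.toReal_nonneg ENNReal.toReal_nonneg
  -- trivial case m U = 0
  have hνU_le : ν U ≤ C * m U := by
    rw [hνdef, withDensity_apply _ hU]
    calc ∫⁻ x in U, ρ x ∂m ≤ ∫⁻ _ in U, C ∂m := lintegral_mono (fun x => hρC x)
      _ = C * m U := by rw [setLIntegral_const]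
  by_cases hmU0 : m U = 0
  · have hνU0 : ν U = 0 := by
      refine le_antisymm ?_ bot_le
      simpa [hmU0] using hνU_le
    simp [hνU0, hmU0, ENNReal.zero_div]
  -- main case
  have hνUtop : ν U ≠ ⊤ := measure_ne_top ν U
  have hνVtop : ν V ≠ ⊤ := measure_ne_top ν V
  -- key two-sided bound
  have key : ∀ ε : ℝ, 0 < ε →
      ν U ≤ ENNReal.ofReal (L + ε) * ν V ∧ ENNReal.ofReal (L - ε) * ν V ≤ ν U := by
    intro ε hε
    set Bad : ℕ → Set X := fun R => {x | ¬((L - ε) * ((c R V x : ℕ) : ℝ) ≤ ((c R U x : ℕ) : ℝ)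
        ∧ ((c R U x : ℕ) : ℝ) ≤ (L + ε) * ((c R V x : ℕ) : ℝ))} with hBad
    have hBadMeas : ∀ R, MeasurableSet (Bad R) := by
      intro R
      have h1 : MeasurableSet {x | (L - ε) * ((c R V x : ℕ) : ℝ) ≤ ((c R U x : ℕ) : ℝ)} :=
        measurableSet_le ((hmeasR R V hV).const_mul _) (hmeasR R U hU)
      have h2 : MeasurableSet {x | ((c R U x : ℕ) : ℝ) ≤ (L + ε) * ((c R V x : ℕ) : ℝ)} :=
        measurableSet_le (hmeasR R U hU) ((hmeasR R V hV).const_mul _)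
      have : Bad R = ({x | (L - ε) * ((c R V x : ℕ) : ℝ) ≤ ((c R U x : ℕ) : ℝ)}
          ∩ {x | ((c R U x : ℕ) : ℝ) ≤ (L + ε) * ((c R V x : ℕ) : ℝ)})ᶜ := by
        rfl
      rw [this]
      exact (h1.inter h2).compl
    have hGood : ∀ x : X, ∀ᶠ R in atTop, x ∉ Bad R := by
      intro x
      have h1 := hpos x V hV hmV0 hmVtop
      have h2 := (hequi x U V hU hV hmU hmV0 hmVtop).eventually
        (Ioo_mem_nhds (by linarith : L - ε < L) (by linarith : L < L + ε))
      filter_upwards [h1, h2] with R hR1 hR2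
      rw [hcard] at hR1
      rw [hcard, hcard] at hR2
      have hv : (0 : ℝ) < ((c R V x : ℕ) : ℝ) := by exact_mod_cast hR1
      simp only [hBad, Set.mem_setOf_eq, not_not]
      constructor
      · exact le_of_lt ((lt_div_iff₀ hv).1 hR2.1)
      · exact le_of_lt ((div_lt_iff₀ hv).1 hR2.2)
    set D : ℕ → Set X := fun R => ⋃ r, ⋃ (_ : R ≤ r), Bad r with hD
    have hBadD : ∀ R, Bad R ⊆ D R := by
      intro R x hx
      exact Set.mem_iUnion₂.2 ⟨R, le_rfl, hx⟩
    have hDmeas : ∀ R, MeasurableSet (D R) :=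
      fun R => MeasurableSet.biUnion (Set.to_countable _) (fun r _ => hBadMeas r)
    have hDanti : Antitone D := by
      intro R1 R2 h x hx
      simp only [hD, Set.mem_iUnion] at hx ⊢
      obtain ⟨r, hr, hxr⟩ := hx
      exact ⟨r, le_trans h hr, hxr⟩
    have hDinter : (⋂ R, D R) = ∅ := by
      ext x
      simp only [Set.mem_iInter, hD, Set.mem_iUnion, Set.mem_empty_iff_false, iff_false,
        not_forall, not_exists]
      obtain ⟨N, hN⟩ := (hGood x).exists_forall_of_atTop
      exact ⟨N, fun r hr => hN r hr⟩
    have hDtend : Tendsto (fun R => ν (D R)) atTop (𝓝 0) := by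
      have h := tendsto_measure_iInter_atTop (μ := ν)
        (fun R => (hDmeas R).nullMeasurableSet) hDanti ⟨0, measure_ne_top ν _⟩
      rw [hDinter] at h
      simpa [Function.comp_def] using h
    have hDnottop : ∀ R, ν (D R) ≠ ⊤ := fun R => measure_ne_top ν _
    -- upper bound
    have hbound1 : ∀ R : ℕ, ν U ≤ ENNReal.ofReal (L + ε) * ν V + ν (D R) := by
      intro R
      have hpt : ∀ x, ((c R U x : ℕ) : ℝ≥0∞) ≤
          ENNReal.ofReal (L + ε) * ((c R V x : ℕ) : ℝ≥0∞)
            + ((T R).card : ℝ≥0∞) * (D R).indicator (1 : X → ℝ≥0∞) x := by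
        intro x
        by_cases hx : x ∈ D R
        · rw [Set.indicator_of_mem hx]
          have h1 : ((c R U x : ℕ) : ℝ≥0∞) ≤ ((T R).card : ℝ≥0∞) := by
            exact_mod_cast hcle R U x
          calc ((c R U x : ℕ) : ℝ≥0∞) ≤ ((T R).card : ℝ≥0∞) * 1 := by simpa using h1
            _ ≤ _ := le_add_self
        · rw [Set.indicator_of_notMem hx, mul_zero, add_zero]
          have hx' : x ∉ Bad R := fun h => hx (hBadD R h)
          have h2 : ((c R U x : ℕ) : ℝ) ≤ (L + ε) * ((c R V x : ℕ) : ℝ) :=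
            (not_not.mp hx').2
          calc ((c R U x : ℕ) : ℝ≥0∞) = ENNReal.ofReal ((c R U x : ℕ) : ℝ) := by
                rw [ENNReal.ofReal_natCast]
            _ ≤ ENNReal.ofReal ((L + ε) * ((c R V x : ℕ) : ℝ)) :=
                ENNReal.ofReal_le_ofReal h2
            _ = ENNReal.ofReal (L + ε) * ENNReal.ofReal ((c R V x : ℕ) : ℝ) :=
                ENNReal.ofReal_mul (by linarith)
            _ = ENNReal.ofReal (L + ε) * ((c R V x : ℕ) : ℝ≥0∞) := by
                rw [ENNReal.ofReal_natCast]
      have hle := lintegral_mono (μ := ν) hpt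
      rw [hint R U hU] at hle
      rw [lintegral_add_left ((hmeasE R V hV).const_mul _),
        lintegral_const_mul _ (hmeasE R V hV), hint R V hV,
        lintegral_const_mul (μ := ν) ((T R).card : ℝ≥0∞)
          (f := fun x => (D R).indicator (1 : X → ℝ≥0∞) x)
          (measurable_const.indicator (hDmeas R)),
        lintegral_indicator_one (hDmeas R)] at hle
      have hle2 : ((T R).card : ℝ≥0∞) * ν U ≤
          ((T R).card : ℝ≥0∞) * (ENNReal.ofReal (L + ε) * ν V + ν (D R)) := by
        calc ((T R).card : ℝ≥0∞) * ν U ≤ _ := hle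
          _ = ((T R).card : ℝ≥0∞) * (ENNReal.ofReal (L + ε) * ν V + ν (D R)) := by ring
      exact (ENNReal.mul_le_mul_iff_right (hTcard0 R) (hTcardtop R)).1 hle2
    -- lower bound
    have hbound2 : ∀ R : ℕ,
        ENNReal.ofReal (L - ε) * ν V ≤ ν U + ENNReal.ofReal (L - ε) * ν (D R) := by
      intro R
      have hpt : ∀ x, ENNReal.ofReal (L - ε) * ((c R V x : ℕ) : ℝ≥0∞) ≤
          ((c R U x : ℕ) : ℝ≥0∞)
            + ENNReal.ofReal (L - ε) * (((T R).card : ℝ≥0∞)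
              * (D R).indicator (1 : X → ℝ≥0∞) x) := by
        intro x
        by_cases hx : x ∈ D R
        · rw [Set.indicator_of_mem hx]
          have h1 : ((c R V x : ℕ) : ℝ≥0∞) ≤ ((T R).card : ℝ≥0∞) := by
            exact_mod_cast hcle R V x
          calc ENNReal.ofReal (L - ε) * ((c R V x : ℕ) : ℝ≥0∞)
              ≤ ENNReal.ofReal (L - ε) * (((T R).card : ℝ≥0∞) * 1) := by
                rw [mul_one]; exact mul_le_mul_right h1 _
            _ ≤ _ := le_add_self
        · rw [Set.indicator_of_notMem hx, mul_zero, mul_zero, add_zero]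
          have hx' : x ∉ Bad R := fun h => hx (hBadD R h)
          have h2 : (L - ε) * ((c R V x : ℕ) : ℝ) ≤ ((c R U x : ℕ) : ℝ) :=
            (not_not.mp hx').1
          by_cases hle0 : L - ε ≤ 0
          · rw [ENNReal.ofReal_eq_zero.2 hle0, zero_mul]
            exact zero_le
          · push_neg at hle0
            calc ENNReal.ofReal (L - ε) * ((c R V x : ℕ) : ℝ≥0∞)
                = ENNReal.ofReal (L - ε) * ENNReal.ofReal ((c R V x : ℕ) : ℝ) := by
                  rw [ENNReal.ofReal_natCast]
              _ = ENNReal.ofReal ((L - ε) * ((c R V x : ℕ) : ℝ)) :=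
                  (ENNReal.ofReal_mul (le_of_lt hle0)).symm
              _ ≤ ENNReal.ofReal ((c R U x : ℕ) : ℝ) := ENNReal.ofReal_le_ofReal h2
              _ = ((c R U x : ℕ) : ℝ≥0∞) := ENNReal.ofReal_natCast _
      have hle := lintegral_mono (μ := ν) hpt
      rw [lintegral_const_mul _ (hmeasE R V hV), hint R V hV] at hle
      rw [lintegral_add_left (hmeasE R U hU), hint R U hU,
        lintegral_const_mul (μ := ν) (ENNReal.ofReal (L - ε))
          (f := fun x => ((T R).card : ℝ≥0∞) * (D R).indicator (1 : X → ℝ≥0∞) x)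
          ((measurable_const.indicator (hDmeas R)).const_mul _),
        lintegral_const_mul (μ := ν) ((T R).card : ℝ≥0∞)
          (f := fun x => (D R).indicator (1 : X → ℝ≥0∞) x)
          (measurable_const.indicator (hDmeas R)),
        lintegral_indicator_one (hDmeas R)] at hle
      have hle2 : ((T R).card : ℝ≥0∞) * (ENNReal.ofReal (L - ε) * ν V) ≤
          ((T R).card : ℝ≥0∞) * (ν U + ENNReal.ofReal (L - ε) * ν (D R)) := by
        calc ((T R).card : ℝ≥0∞) * (ENNReal.ofReal (L - ε) * ν V)
            = ENNReal.ofReal (L - ε) * (((T R).card : ℝ≥0∞) * ν V) := by ring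
          _ ≤ _ := hle
          _ = ((T R).card : ℝ≥0∞) * (ν U + ENNReal.ofReal (L - ε) * ν (D R)) := by ring
      exact (ENNReal.mul_le_mul_iff_right (hTcard0 R) (hTcardtop R)).1 hle2
    constructor
    · have htend : Tendsto (fun R => ENNReal.ofReal (L + ε) * ν V + ν (D R)) atTop
          (𝓝 (ENNReal.ofReal (L + ε) * ν V + 0)) :=
        tendsto_const_nhds.add hDtend
      have := ge_of_tendsto htend (Eventually.of_forall hbound1)
      simpa using this
    · have htend0 : Tendsto (fun R => ENNReal.ofReal (L - ε) * ν (D R)) atTop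
          (𝓝 (ENNReal.ofReal (L - ε) * 0)) :=
        ENNReal.Tendsto.const_mul hDtend (Or.inr ENNReal.ofReal_ne_top)
      have htend : Tendsto (fun R => ν U + ENNReal.ofReal (L - ε) * ν (D R)) atTop
          (𝓝 (ν U + ENNReal.ofReal (L - ε) * 0)) :=
        tendsto_const_nhds.add htend0
      have := ge_of_tendsto htend (Eventually.of_forall hbound2)
      simpa using this
  -- squeeze in ℝ
  set a : ℝ := (ν U).toReal with ha
  set b : ℝ := (ν V).toReal with hb
  have hb0 : 0 < b := ENNReal.toReal_pos hνV.ne' hνVtop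
  have hupper : ∀ ε : ℝ, 0 < ε → a ≤ (L + ε) * b := by
    intro ε hε
    have h := (key ε hε).1
    have hfin : ENNReal.ofReal (L + ε) * ν V ≠ ⊤ :=
      ENNReal.mul_ne_top ENNReal.ofReal_ne_top hνVtop
    have := ENNReal.toReal_mono hfin h
    rwa [ENNReal.toReal_mul, ENNReal.toReal_ofReal (by linarith)] at this
  have hlower : ∀ ε : ℝ, 0 < ε → (L - ε) * b ≤ a := by
    intro ε hε
    by_cases hle0 : L - ε ≤ 0
    · calc (L - ε) * b ≤ 0 := mul_nonpos_of_nonpos_of_nonneg hle0 (le_of_lt hb0)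
        _ ≤ a := ENNReal.toReal_nonneg
    · push_neg at hle0
      have h := (key ε hε).2
      have := ENNReal.toReal_mono hνUtop h
      rwa [ENNReal.toReal_mul, ENNReal.toReal_ofReal (le_of_lt hle0)] at this
  have hab : a = L * b := by
    apply le_antisymm
    · apply _root_.le_of_forall_pos_le_add
      intro δ hδ
      have := hupper (δ / b) (div_pos hδ hb0)
      calc a ≤ (L + δ / b) * b := this
        _ = L * b + δ := by field_simp
    · apply _root_.le_of_forall_pos_le_add
      intro δ hδ
      have := hlower (δ / b) (div_pos hδ hb0)
      have h2 : (L - δ / b) * b = L * b - δ := by field_simp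
      linarith [this, h2 ▸ this]
  -- conclude
  have hmVne : m V ≠ 0 := hmV0.ne'
  have hνVne : ν V ≠ 0 := hνV.ne'
  have hfin1 : ν U / ν V ≠ ⊤ := (ENNReal.div_lt_top hνUtop hνVne).ne
  have hfin2 : m U / m V ≠ ⊤ := (ENNReal.div_lt_top hmU.ne hmVne).ne
  rw [← ENNReal.toReal_eq_toReal_iff' hfin1 hfin2, ENNReal.toReal_div, ENNReal.toReal_div]
  rw [← ha, ← hb, hab, hL, mul_div_assoc, div_self hb0.ne', mul_one]
end
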